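/- arXiv:1911.12155 — 2 statements merged into one kernel-verified Lean document; each statement's English description precedes it below -/
import Mathlib

section
/- For every integer n ≥ 1, ∫₀¹ (log(1+x))^n / x dx = −n! · ∑_{k=0}^{n−1} (log^k 2 / k!) · Li_{n+1−k}(1/2) + n! · ζ(n+1) − n · log^{n+1} 2 / (n+1). -/
open scoped BigOperators
open Real Finset MeasureTheory

/-- Riemann zeta value `ζ(m) = ∑_{k=1}^∞ 1/k^m`. -/
noncomputable def zeta (m : ℕ) : ℝ := ∑' k : ℕ, 1 / ((k : ℝ) + 1) ^ m

/-- Polylogarithm `Li_m(x) = ∑_{k=1}^∞ x^k/k^m`. -/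
noncomputable def Li (m : ℕ) (x : ℝ) : ℝ := ∑' k : ℕ, x ^ (k + 1) / ((k : ℝ) + 1) ^ m

lemma truncExp_deriv (c : ℝ) (n : ℕ) (t : ℝ) :
    HasDerivAt (fun s => ∑ k ∈ range (n+1), (c*s)^k / (k.factorial : ℝ) * Real.exp (-(c*s)))
      (-(c * ((c*t)^n / (n.factorial : ℝ)) * Real.exp (-(c*t)))) t := by
  induction n with
  | zero =>
      have hd : HasDerivAt (fun s : ℝ => -(c*s)) (-c) t := by
        simpa using ((hasDerivAt_id t).const_mul c).fun_neg
      have h := hd.exp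
      have hfun : (fun s : ℝ => ∑ k ∈ range 1, (c*s)^k/(k.factorial:ℝ) * Real.exp (-(c*s)))
          = fun s => Real.exp (-(c*s)) := by
        funext s; simp
      rw [show (0:ℕ)+1 = 1 from rfl, hfun]
      convert h using 1
      simp [pow_zero]
      ring
  | succ n ih =>
      have hcs : HasDerivAt (fun s : ℝ => c * s) c t := by
        simpa using (hasDerivAt_id t).const_mul c
      have hpow : HasDerivAt (fun s : ℝ => (c*s)^(n+1)) ((n+1 : ℕ) * (c*t)^n * c) t := by
        simpa using hcs.fun_pow (n+1)
      have hexp : HasDerivAt (fun s : ℝ => Real.exp (-(c*s))) (Real.exp (-(c*t)) * (-c)) t :=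
        hcs.neg.exp
      have hterm : HasDerivAt
          (fun s : ℝ => (c*s)^(n+1) / ((n+1).factorial : ℝ) * Real.exp (-(c*s)))
          (((n+1 : ℕ) * (c*t)^n * c) / ((n+1).factorial : ℝ) * Real.exp (-(c*t))
            + (c*t)^(n+1) / ((n+1).factorial : ℝ) * (Real.exp (-(c*t)) * (-c))) t := by
        exact (hpow.div_const _).mul hexp
      have hsum := ih.fun_add hterm
      have hfun : (fun s => (∑ k ∈ range (n+1), (c*s)^k / (k.factorial : ℝ) * Real.exp (-(c*s)))
            + ((c*s)^(n+1) / ((n+1).factorial : ℝ) * Real.exp (-(c*s))))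
          = fun s => ∑ k ∈ range (n+2), (c*s)^k / (k.factorial : ℝ) * Real.exp (-(c*s)) := by
        funext s
        rw [eq_comm, Finset.sum_range_succ]
      rw [hfun] at hsum
      refine hsum.congr_deriv ?_
      have h1 : ((n+1).factorial : ℝ) = ((n+1 : ℕ) : ℝ) * (n.factorial : ℝ) := by
        push_cast [Nat.factorial_succ]; ring
      have h2 : ((n : ℝ) + 1) ≠ 0 := by positivity
      have h3 : (n.factorial : ℝ) ≠ 0 := Nat.cast_ne_zero.mpr n.factorial_ne_zero
      rw [h1]
      push_cast
      field_simp
      ring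

lemma integral_pow_exp (c : ℝ) (hc : 0 < c) (n : ℕ) (L : ℝ) (hL : 0 ≤ L) :
    ∫ t in Set.Ioc (0:ℝ) L, t^n * Real.exp (-(c*t))
      = (n.factorial : ℝ) / c^(n+1)
        * (1 - (∑ k ∈ range (n+1), (c*L)^k / (k.factorial : ℝ)) * Real.exp (-(c*L))) := by
  rw [← intervalIntegral.integral_of_le hL]
  have key : ∀ t ∈ Set.uIcc (0:ℝ) L,
      HasDerivAt (fun s => -((n.factorial : ℝ) / c^(n+1))
          * ∑ k ∈ range (n+1), (c*s)^k / (k.factorial : ℝ) * Real.exp (-(c*s)))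
        (t^n * Real.exp (-(c*t))) t := by
    intro t _
    have h := (truncExp_deriv c n t).const_mul (-((n.factorial : ℝ) / c^(n+1)))
    refine h.congr_deriv ?_
    have hc' : c ≠ 0 := hc.ne'
    have hf : (n.factorial : ℝ) ≠ 0 := Nat.cast_ne_zero.mpr n.factorial_ne_zero
    rw [mul_pow]
    field_simp
    ring
  have hint : IntervalIntegrable (fun t : ℝ => t^n * Real.exp (-(c*t))) volume 0 L :=
    (Continuous.mul (continuous_pow n) (by continuity)).intervalIntegrable 0 L
  rw [intervalIntegral.integral_eq_sub_of_hasDerivAt key hint]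
  have h0 : (∑ x ∈ range (n+1), (0:ℝ)^x / (x.factorial:ℝ) * Real.exp (-(0:ℝ))) = 1 := by
    rw [Finset.sum_eq_single 0]
    · simp
    · intro k _ hk
      simp [zero_pow hk]
    · simp
  simp only [mul_zero]
  rw [h0, ← Finset.sum_mul]
  ring

lemma image_exp_sub_one : (fun t : ℝ => Real.exp t - 1) '' Set.Ioc 0 (Real.log 2)
    = Set.Ioc (0:ℝ) 1 := by
  ext y
  constructor
  · rintro ⟨t, ⟨ht0, htL⟩, rfl⟩
    constructor
    · simp only [sub_pos]
      exact Real.one_lt_exp_iff.mpr ht0 |>.trans_le le_rfl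
    · have : Real.exp t ≤ 2 := by
        calc Real.exp t ≤ Real.exp (Real.log 2) := Real.exp_le_exp.mpr htL
        _ = 2 := Real.exp_log two_pos
      simp only []
      linarith
  · rintro ⟨hy0, hy1⟩
    refine ⟨Real.log (1 + y), ⟨?_, ?_⟩, ?_⟩
    · exact Real.log_pos (by linarith)
    · exact Real.log_le_log (by linarith) (by linarith)
    · show Real.exp (Real.log (1+y)) - 1 = y
      rw [Real.exp_log (by linarith)]; ring

lemma subst_step (n : ℕ) :
    ∫ x in Set.Ioc (0:ℝ) 1, Real.log (1+x)^n / x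
      = ∫ t in Set.Ioc (0:ℝ) (Real.log 2), Real.exp t * (t^n / (Real.exp t - 1)) := by
  rw [← image_exp_sub_one]
  rw [integral_image_eq_integral_abs_deriv_smul measurableSet_Ioc
    (fun t _ => ((Real.hasDerivAt_exp t).sub_const 1).hasDerivWithinAt)
    (fun a _ b _ h => by
      have := Real.exp_injective (by linarith : Real.exp a = Real.exp b)
      exact this)]
  refine setIntegral_congr_fun measurableSet_Ioc (fun t ht => ?_)
  have h1 : (1:ℝ) + (Real.exp t - 1) = Real.exp t := by ring
  have h2 : Real.log (1 + (Real.exp t - 1)) = t := by rw [h1, Real.log_exp]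
  simp only [smul_eq_mul, h2, abs_of_pos (Real.exp_pos t)]

lemma pointwise_series (n : ℕ) (t : ℝ) (ht : 0 < t) :
    Real.exp t * (t^n / (Real.exp t - 1)) = ∑' j : ℕ, t^n * Real.exp (-((j:ℝ)*t)) := by
  have he : Real.exp (-t) < 1 := Real.exp_lt_one_iff.mpr (by linarith)
  have hrw : ∀ j : ℕ, t^n * Real.exp (-((j:ℝ)*t)) = t^n * (Real.exp (-t))^j := by
    intro j
    rw [show -((j:ℝ)*t) = (j:ℝ)*(-t) by ring, Real.exp_nat_mul]
  rw [tsum_congr hrw, tsum_mul_left, tsum_geometric_of_lt_one (Real.exp_nonneg _) he]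
  have h1 : Real.exp t - 1 ≠ 0 := by
    have := Real.one_lt_exp_iff.mpr ht
    linarith
  have h2 : 1 - Real.exp (-t) ≠ 0 := by linarith
  rw [Real.exp_neg] at h2 ⊢
  have h3 : Real.exp t ≠ 0 := (Real.exp_pos t).ne'
  field_simp

lemma summable_li (m : ℕ) : Summable (fun j : ℕ => (1/2:ℝ)^(j+1) / ((j:ℝ)+1)^m) := by
  apply Summable.of_nonneg_of_le (fun j => by positivity) (fun j => ?_)
    (summable_geometric_of_lt_one (by norm_num : (0:ℝ) ≤ 1/2) (by norm_num))
  have h1 : (1:ℝ) ≤ ((j:ℝ)+1)^m := one_le_pow₀ (by linarith [Nat.cast_nonneg (α:=ℝ) j])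
  calc (1/2:ℝ)^(j+1) / ((j:ℝ)+1)^m ≤ (1/2:ℝ)^(j+1) / 1 := by
        gcongr
  _ = (1/2:ℝ) * (1/2)^j := by rw [div_one, pow_succ]; ring
  _ ≤ (1/2:ℝ)^j := by
        have : (0:ℝ) ≤ (1/2:ℝ)^j := by positivity
        linarith

lemma summable_zeta (m : ℕ) (hm : 2 ≤ m) : Summable (fun j : ℕ => 1 / ((j:ℝ)+1)^m) := by
  have := (summable_one_div_nat_pow (p := m)).mpr hm
  have h2 := (summable_nat_add_iff 1).mpr this
  refine h2.congr fun j => ?_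
  push_cast
  ring_nf

lemma J_formula (n j : ℕ) :
    (∫ t in Set.Ioc (0:ℝ) (Real.log 2), t^n * Real.exp (-(((j:ℝ)+1)*t)))
      = (n.factorial : ℝ) * (1 / ((j:ℝ)+1)^(n+1))
        - ∑ k ∈ range (n+1), ((n.factorial : ℝ) * Real.log 2 ^ k / (k.factorial : ℝ))
            * ((1/2:ℝ)^(j+1) / ((j:ℝ)+1)^(n+1-k)) := by
  have hc : (0:ℝ) < (j:ℝ)+1 := by positivity
  have hL : (0:ℝ) ≤ Real.log 2 := Real.log_nonneg one_le_two
  rw [integral_pow_exp _ hc n _ hL]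
  have hexp : Real.exp (-(((j:ℝ)+1) * Real.log 2)) = (1/2:ℝ)^(j+1) := by
    rw [show (((j:ℝ)+1) * Real.log 2) = ((j+1 : ℕ):ℝ) * Real.log 2 by push_cast; ring,
      Real.exp_neg, Real.exp_nat_mul, Real.exp_log two_pos]
    rw [one_div, inv_pow]
  rw [hexp, mul_sub, mul_one]
  congr 1
  · ring
  · rw [Finset.sum_mul, Finset.mul_sum]
    refine Finset.sum_congr rfl (fun k hk => ?_)
    have hkn : k ≤ n := Nat.lt_succ_iff.mp (Finset.mem_range.mp hk)
    have hpow : ((j:ℝ)+1)^(n+1-k) = ((j:ℝ)+1)^(n+1) / ((j:ℝ)+1)^k :=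
      pow_sub₀ _ hc.ne' (by omega)
    rw [mul_pow, hpow]
    have h1 : ((j:ℝ)+1) ≠ 0 := hc.ne'
    field_simp

lemma summable_J (n : ℕ) (hn : 1 ≤ n) :
    Summable (fun j : ℕ =>
      ∫ t in Set.Ioc (0:ℝ) (Real.log 2), t^n * Real.exp (-(((j:ℝ)+1)*t))) := by
  have h1 := (summable_zeta (n+1) (by omega)).mul_left (n.factorial : ℝ)
  have h2 : Summable (fun j : ℕ => ∑ k ∈ range (n+1),
      ((n.factorial : ℝ) * Real.log 2 ^ k / (k.factorial : ℝ))
        * ((1/2:ℝ)^(j+1) / ((j:ℝ)+1)^(n+1-k))) := by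
    exact summable_sum fun k _ => (summable_li (n+1-k)).mul_left _
  exact (h1.sub h2).congr fun j => (J_formula n j).symm

/-- Proposition 1 (8): the Nielsen–Ramanujan integral
`∫₀¹ log(1+x)^n/x dx = −n! ∑_{k=0}^{n−1} log^k 2/k! · Li_{n+1−k}(1/2) + n!·ζ(n+1)
  − n·log^{n+1}2/(n+1)`. -/
theorem LI_0_0_n_1 (n : ℕ) (hn : 1 ≤ n) :
    (∫ x in (0:ℝ)..1, Real.log (1 + x) ^ n / x)
      = -(n.factorial : ℝ) *
          (∑ k ∈ Finset.range n, Real.log 2 ^ k / (k.factorial : ℝ) * Li (n + 1 - k) (1 / 2))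
        + (n.factorial : ℝ) * zeta (n + 1)
        - (n : ℝ) * Real.log 2 ^ (n + 1) / ((n : ℝ) + 1) := by
  set L := Real.log 2 with hLdef
  have hL : 0 ≤ L := Real.log_nonneg one_le_two
  -- Step 1: interval integral to set integral, then substitution
  rw [intervalIntegral.integral_of_le zero_le_one]
  rw [subst_step n]
  -- Step 2: expand into a series pointwise a.e.
  have hptw : ∀ t ∈ Set.Ioc (0:ℝ) L,
      Real.exp t * (t^n / (Real.exp t - 1)) = ∑' j : ℕ, t^n * Real.exp (-((j:ℝ)*t)) :=
    fun t ht => pointwise_series n t ht.1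
  rw [setIntegral_congr_fun measurableSet_Ioc hptw]
  -- Step 3: swap integral and sum
  set J : ℕ → ℝ := fun j => ∫ t in Set.Ioc (0:ℝ) L, t^n * Real.exp (-((j:ℝ)*t)) with hJdef
  have hJshift : ∀ j : ℕ, J (j+1)
      = ∫ t in Set.Ioc (0:ℝ) L, t^n * Real.exp (-(((j:ℝ)+1)*t)) := by
    intro j
    simp only [hJdef]
    norm_num
  have hJsummable : Summable J := by
    apply (summable_nat_add_iff 1).mp
    refine (summable_J n hn).congr fun j => ?_
    rw [hJshift j]
  have hswap : (∫ t in Set.Ioc (0:ℝ) L, ∑' j : ℕ, t^n * Real.exp (-((j:ℝ)*t)))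
      = ∑' j : ℕ, J j := by
    rw [hJdef]
    apply integral_tsum
    · intro j
      exact (Continuous.mul (continuous_pow n) (by continuity)).aestronglyMeasurable
    · have hint : ∀ j : ℕ, IntegrableOn (fun t : ℝ => t^n * Real.exp (-((j:ℝ)*t)))
          (Set.Ioc (0:ℝ) L) := fun j => Continuous.integrableOn_Ioc (by continuity)
      have hnn : ∀ j : ℕ, 0 ≤ᵐ[volume.restrict (Set.Ioc (0:ℝ) L)]
          (fun t : ℝ => t^n * Real.exp (-((j:ℝ)*t))) := by
        intro j
        rw [Filter.EventuallyLE, ae_restrict_iff' measurableSet_Ioc]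
        exact Filter.Eventually.of_forall fun t ht =>
          mul_nonneg (pow_nonneg ht.1.le n) (Real.exp_nonneg _)
      have heq : ∀ j : ℕ, (∫⁻ t in Set.Ioc (0:ℝ) L, ‖t^n * Real.exp (-((j:ℝ)*t))‖ₑ)
          = ENNReal.ofReal (J j) := by
        intro j
        rw [hJdef]
        rw [MeasureTheory.ofReal_integral_eq_lintegral_ofReal (hint j) (hnn j)]
        apply lintegral_congr_ae
        filter_upwards [hnn j] with t ht
        exact Real.enorm_eq_ofReal ht
      rw [tsum_congr heq]
      rw [← ENNReal.ofReal_tsum_of_nonneg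
        (fun j => setIntegral_nonneg measurableSet_Ioc fun t ht =>
          mul_nonneg (pow_nonneg ht.1.le n) (Real.exp_nonneg _)) hJsummable]
      exact ENNReal.ofReal_ne_top
  rw [hswap]
  -- Step 4: split off the first term and evaluate
  rw [Summable.tsum_eq_zero_add hJsummable]
  have hJ0 : J 0 = L^(n+1) / ((n:ℝ)+1) := by
    have : J 0 = ∫ t in Set.Ioc (0:ℝ) L, t^n := by
      simp only [hJdef]
      refine setIntegral_congr_fun measurableSet_Ioc fun t _ => ?_
      norm_num
    rw [this, ← intervalIntegral.integral_of_le hL, integral_pow]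
    ring
  -- Step 5: evaluate the tail sum
  have htail : (∑' j : ℕ, J (j+1))
      = (n.factorial : ℝ) * zeta (n+1)
        - ∑ k ∈ range (n+1), ((n.factorial : ℝ) * L^k / (k.factorial : ℝ)) * Li (n+1-k) (1/2) := by
    have h1 := (summable_zeta (n+1) (by omega)).mul_left (n.factorial : ℝ)
    have h2 : Summable (fun j : ℕ => ∑ k ∈ range (n+1),
        ((n.factorial : ℝ) * L^k / (k.factorial : ℝ))
          * ((1/2:ℝ)^(j+1) / ((j:ℝ)+1)^(n+1-k))) :=
      summable_sum fun k _ => (summable_li (n+1-k)).mul_left _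
    have heq : ∀ j : ℕ, J (j+1)
        = (n.factorial : ℝ) * (1 / ((j:ℝ)+1)^(n+1))
          - ∑ k ∈ range (n+1), ((n.factorial : ℝ) * L^k / (k.factorial : ℝ))
              * ((1/2:ℝ)^(j+1) / ((j:ℝ)+1)^(n+1-k)) := by
      intro j
      rw [hJshift j, J_formula n j]
    rw [tsum_congr heq, Summable.tsum_sub ((summable_zeta (n+1) (by omega)).mul_left _) h2,
      tsum_mul_left, Summable.tsum_finsetSum (fun k _ => (summable_li (n+1-k)).mul_left _)]
    congr 1
    refine Finset.sum_congr rfl fun k _ => ?_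
    rw [tsum_mul_left]
    rfl
  rw [hJ0, htail]
  -- Step 6: final algebra, extract the k = n term
  rw [Finset.sum_range_succ]
  have hLi1 : Li 1 (1/2) = L := by
    have h := Real.hasSum_pow_div_log_of_abs_lt_one
      (x := (1/2:ℝ)) (abs_lt.mpr ⟨by norm_num, by norm_num⟩)
    have h2 : Li 1 (1/2) = -Real.log (1 - 1/2) := by
      rw [Li]
      rw [tsum_congr (fun k : ℕ => by rw [pow_one] :
        ∀ k : ℕ, (1/2:ℝ)^(k+1)/((k:ℝ)+1)^1 = (1/2:ℝ)^(k+1)/((k:ℝ)+1))]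
      exact h.tsum_eq
    rw [h2, hLdef]
    norm_num
    rw [one_div, Real.log_inv, neg_neg]
  have hfact : (n.factorial : ℝ) ≠ 0 := Nat.cast_ne_zero.mpr n.factorial_ne_zero
  have hm : ∑ k ∈ range n, ((n.factorial : ℝ) * L^k / (k.factorial : ℝ)) * Li (n+1-k) (1/2)
      = (n.factorial : ℝ) * ∑ k ∈ range n, L^k / (k.factorial : ℝ) * Li (n+1-k) (1/2) := by
    rw [Finset.mul_sum]
    exact Finset.sum_congr rfl fun k _ => by ring
  rw [show n+1-n = 1 from by omega, hLi1, hm]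
  have hn1 : ((n:ℝ)+1) ≠ 0 := by positivity
  field_simp
  ring
end

section
/- For every real x with 0 < x < 1, ∑_{n=1}^∞ (H_n)² x^n / n² = Li₂(x)²/2 − 2 Li₄(1−x) + Li₄(x) − Li₂(1−x) · log²(1−x) + 2 Li₃(1−x) · log(1−x) − (1/3) log x · log³(1−x) + π⁴/45. -/
open scoped BigOperators

/-- Harmonic number `H_n = ∑_{j=1}^n 1/j`. -/
noncomputable def H (n : ℕ) : ℝ := ∑ j ∈ Finset.Icc 1 n, 1 / (j : ℝ)

open Real Filter Set Topology

set_option maxHeartbeats 1000000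

lemma H_zero : H 0 = 0 := by simp [H]

lemma H_succ (n : ℕ) : H (n + 1) = H n + 1 / ((n : ℝ) + 1) := by
  unfold H
  rw [Finset.sum_Icc_succ_top (by omega : 1 ≤ n + 1)]
  push_cast; ring

lemma H_nonneg (n : ℕ) : 0 ≤ H n :=
  Finset.sum_nonneg fun j _ => by positivity

lemma H_le (n : ℕ) : H (n + 1) ≤ (n : ℝ) + 1 := by
  induction n with
  | zero => simp [H]
  | succ n ih =>
    rw [H_succ]
    have h1 : 1 / ((n : ℝ) + 1 + 1) ≤ 1 := by
      rw [div_le_one (by positivity)]; linarith [Nat.cast_nonneg (α := ℝ) n]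
    push_cast
    push_cast at ih
    linarith

lemma summable_sq_geom_nn {r : ℝ} (h0 : 0 ≤ r) (hr : r < 1) (k : ℕ) :
    Summable (fun n : ℕ => ((n : ℝ) + 1) ^ k * r ^ n) := by
  rcases eq_or_ne r 0 with h | h
  · subst h
    apply summable_of_finite_support
    apply Set.Finite.subset (Set.finite_singleton 0)
    intro n hn
    simp only [Function.mem_support] at hn
    by_contra hne
    exact hn (by simp [zero_pow, (by simpa using hne : n ≠ 0)])
  · have hgeom := summable_pow_mul_geometric_of_norm_lt_one (R := ℝ) k
      (r := r) (by rwa [Real.norm_eq_abs, abs_of_nonneg h0])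
    have h2 := (summable_nat_add_iff 1).2 hgeom
    have h3 : Summable (fun n : ℕ => r * (((n:ℝ)+1) ^ k * r ^ n)) := by
      apply h2.congr
      intro n
      push_cast
      ring
    exact (summable_mul_left_iff h).1 h3

lemma summable_sq_geom {r : ℝ} (hr : |r| < 1) (k : ℕ) :
    Summable (fun n : ℕ => ((n : ℝ) + 1) ^ k * r ^ n) := by
  apply Summable.of_norm
  apply (summable_sq_geom_nn (abs_nonneg r) hr k).congr
  intro n
  rw [Real.norm_eq_abs, abs_mul, abs_pow, abs_pow,
    abs_of_nonneg (by positivity : (0:ℝ) ≤ (n:ℝ)+1)]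

lemma summable_aux {a : ℕ → ℝ} (ha : ∀ n, |a n| ≤ ((n:ℝ)+1)^2) {x : ℝ} (hx : |x| < 1) :
    Summable (fun n => a n * x ^ (n+1)) := by
  have hg : Summable (fun n : ℕ => ((n:ℝ)+1)^2 * |x|^(n+1)) := by
    have := (summable_sq_geom_nn (abs_nonneg x) hx 2).mul_left |x|
    apply this.congr
    intro n
    rw [pow_succ]
    ring
  apply Summable.of_norm_bounded hg
  intro n
  rw [Real.norm_eq_abs, abs_mul, abs_pow]
  exact mul_le_mul_of_nonneg_right (ha n) (by positivity)

lemma hasDerivAt_tsum_pow {a : ℕ → ℝ} (ha : ∀ n, |a n| ≤ ((n:ℝ)+1)^2) {x : ℝ}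
    (hx0 : 0 < x) (hx1 : x < 1) :
    HasDerivAt (fun y => ∑' n, a n * y ^ (n+1)) (∑' n : ℕ, ((n:ℝ)+1) * a n * x ^ n) x := by
  set r : ℝ := (1 + x) / 2 with hr
  have hrx : x < r := by rw [hr]; linarith
  have hr0 : 0 < r := by rw [hr]; linarith
  have hr1 : r < 1 := by rw [hr]; linarith
  have hu : Summable (fun n : ℕ => ((n:ℝ)+1)^3 * r ^ n) := summable_sq_geom_nn hr0.le hr1 3
  refine hasDerivAt_tsum_of_isPreconnected (g := fun n y => a n * y ^ (n+1))
    (g' := fun n y => ((n:ℝ)+1) * a n * y ^ n) hu (isOpen_Ioo (a := -r) (b := r))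
    (convex_Ioo _ _).isPreconnected (fun n y _ => ?_) (fun n y hy => ?_)
    (show (0:ℝ) ∈ Ioo (-r) r from ⟨by linarith, hr0⟩) ?_ ⟨by linarith, hrx⟩
  · have h := (hasDerivAt_pow (n+1) y).const_mul (a n)
    refine h.congr_deriv ?_
    push_cast
    ring
  · rw [Real.norm_eq_abs, abs_mul, abs_mul, abs_pow]
    have h1 : |((n:ℝ)+1)| = (n:ℝ)+1 := abs_of_nonneg (by positivity)
    have h2 : |y| ≤ r := by
      rw [abs_le]; exact ⟨hy.1.le, hy.2.le⟩
    calc |((n:ℝ)+1)| * |a n| * |y| ^ n ≤ ((n:ℝ)+1) * ((n:ℝ)+1)^2 * r ^ n := by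
          rw [h1]
          apply mul_le_mul
          · exact mul_le_mul_of_nonneg_left (ha n) (by positivity)
          · exact pow_le_pow_left₀ (abs_nonneg y) h2 n
          · positivity
          · positivity
      _ = ((n:ℝ)+1)^3 * r ^ n := by ring
  · apply Summable.congr summable_zero
    intro n
    simp

lemma tendsto_tsum_zero {a : ℕ → ℝ} (ha : ∀ n, |a n| ≤ ((n:ℝ)+1)^2) :
    Tendsto (fun x => ∑' n, a n * x ^ (n+1)) (𝓝[>] (0:ℝ)) (𝓝 0) := by
  set C : ℝ := ∑' n : ℕ, ((n:ℝ)+1)^2 * (1/2) ^ n with hC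
  have hC2 : Summable (fun n : ℕ => ((n:ℝ)+1)^2 * (1/2:ℝ) ^ n) :=
    summable_sq_geom_nn (by norm_num) (by norm_num) 2
  apply squeeze_zero_norm' (a := fun x => C * x)
  · filter_upwards [Ioo_mem_nhdsGT_of_mem (Set.mem_Ico.2 ⟨le_refl (0:ℝ), (by norm_num : (0:ℝ) < 1/2)⟩)
      ] with x hx
    have h1 : (0:ℝ) < x := hx.1
    have h2 : x < 1/2 := hx.2
    have hx1 : |x| < 1 := by rw [abs_of_pos h1]; linarith
    have hs : Summable (fun n => a n * x ^ (n+1)) := summable_aux ha hx1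
    have hs2 : Summable (fun n : ℕ => ((n:ℝ)+1)^2 * x ^ (n+1)) :=
      summable_aux (fun n => le_of_eq (abs_of_nonneg (by positivity))) hx1
    have hb1 : ‖∑' n, a n * x ^ (n+1)‖ ≤ ∑' n, ‖a n * x ^ (n+1)‖ :=
      norm_tsum_le_tsum_norm hs.norm
    have hb2 : ∑' n, ‖a n * x ^ (n+1)‖ ≤ ∑' n : ℕ, ((n:ℝ)+1)^2 * x ^ (n+1) := by
      apply Summable.tsum_le_tsum _ hs.norm hs2
      intro n
      rw [Real.norm_eq_abs, abs_mul, abs_pow, abs_of_pos h1]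
      exact mul_le_mul_of_nonneg_right (ha n) (by positivity)
    have hb3 : ∑' n : ℕ, ((n:ℝ)+1)^2 * x ^ (n+1) = x * ∑' n : ℕ, ((n:ℝ)+1)^2 * x ^ n := by
      rw [← tsum_mul_left]
      exact tsum_congr fun n => by rw [pow_succ]; ring
    have hb4 : ∑' n : ℕ, ((n:ℝ)+1)^2 * x ^ n ≤ C := by
      apply Summable.tsum_le_tsum _ (summable_sq_geom_nn h1.le (by linarith) 2) hC2
      intro n
      apply mul_le_mul_of_nonneg_left _ (by positivity)
      exact pow_le_pow_left₀ h1.le h2.le n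
    calc ‖∑' n, a n * x ^ (n+1)‖ ≤ ∑' n : ℕ, ((n:ℝ)+1)^2 * x ^ (n+1) := hb1.trans hb2
      _ = x * ∑' n : ℕ, ((n:ℝ)+1)^2 * x ^ n := hb3
      _ ≤ x * C := mul_le_mul_of_nonneg_left hb4 h1.le
      _ = C * x := mul_comm _ _
  · have : Tendsto (fun x : ℝ => C * x) (𝓝 (0:ℝ)) (𝓝 (C * 0)) :=
      (continuous_const.mul continuous_id).tendsto 0
    simpa using this.mono_left nhdsWithin_le_nhds


lemma Li_eq (m : ℕ) (x : ℝ) :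
    Li m x = ∑' n : ℕ, (1 / ((n:ℝ)+1) ^ m) * x ^ (n+1) :=
  tsum_congr fun n => by ring

lemma Li_coeff_bound (m : ℕ) : ∀ n : ℕ, |1 / ((n:ℝ)+1) ^ m| ≤ ((n:ℝ)+1)^2 := by
  intro n
  have h1 : (1:ℝ) ≤ ((n:ℝ)+1) ^ m := one_le_pow₀ (by linarith [Nat.cast_nonneg (α := ℝ) n])
  rw [abs_of_nonneg (by positivity)]
  have : 1 / ((n:ℝ)+1) ^ m ≤ 1 := by
    rw [div_le_one (by positivity)]; exact h1
  have : (1:ℝ) ≤ ((n:ℝ)+1)^2 := one_le_pow₀ (by linarith [Nat.cast_nonneg (α := ℝ) n])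
  linarith

lemma Li_one_eq {x : ℝ} (hx : |x| < 1) : Li 1 x = -Real.log (1 - x) := by
  have h := Real.hasSum_pow_div_log_of_abs_lt_one hx
  rw [← h.tsum_eq]
  exact tsum_congr fun n => by rw [pow_one]

lemma summable_Li (m : ℕ) {x : ℝ} (hx : |x| < 1) :
    Summable (fun n : ℕ => (1 / ((n:ℝ)+1) ^ m) * x ^ (n+1)) :=
  summable_aux (Li_coeff_bound m) hx

lemma hasDerivAt_Li (m : ℕ) {x : ℝ} (hx0 : 0 < x) (hx1 : x < 1) :
    HasDerivAt (Li (m+1)) (Li m x / x) x := by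
  have h := hasDerivAt_tsum_pow (Li_coeff_bound (m+1)) hx0 hx1
  have heq : (fun y => ∑' n : ℕ, (1 / ((n:ℝ)+1) ^ (m+1)) * y ^ (n+1)) = Li (m+1) :=
    funext fun y => (Li_eq _ _).symm
  rw [heq] at h
  convert h using 1
  have hterm : ∀ n : ℕ, ((n:ℝ)+1) * (1 / ((n:ℝ)+1) ^ (m+1)) * x ^ n
      = ((1 / ((n:ℝ)+1) ^ m) * x ^ (n+1)) / x := by
    intro n
    have hn : ((n:ℝ)+1) ≠ 0 := by positivity
    field_simp
    ring
  rw [tsum_congr hterm, tsum_div_const, ← Li_eq]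

lemma tendsto_Li_zero (m : ℕ) : Tendsto (fun x => Li m x) (𝓝[>] (0:ℝ)) (𝓝 0) := by
  have : (fun x => Li m x) = fun x => ∑' n : ℕ, (1 / ((n:ℝ)+1) ^ m) * x ^ (n+1) :=
    funext fun x => Li_eq m x
  rw [this]
  exact tendsto_tsum_zero (Li_coeff_bound m)

lemma tendsto_Li_one {m : ℕ} (hm : 2 ≤ m) :
    Tendsto (fun x => Li m (1 - x)) (𝓝[>] (0:ℝ)) (𝓝 (Li m 1)) := by
  have hsum : Summable (fun k : ℕ => 1 / ((k:ℝ)+1) ^ 2) := by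
    have h := (summable_nat_add_iff (f := fun n : ℕ => 1 / (n:ℝ)^2) 1).2
      (Real.summable_one_div_nat_pow.2 one_lt_two)
    apply h.congr
    intro n
    push_cast
    ring_nf
  have := tendsto_tsum_of_dominated_convergence (𝓕 := 𝓝[>] (0:ℝ))
    (f := fun x (k : ℕ) => (1-x) ^ (k+1) / ((k:ℝ)+1) ^ m)
    (g := fun k : ℕ => (1:ℝ) ^ (k+1) / ((k:ℝ)+1) ^ m)
    (bound := fun k : ℕ => 1 / ((k:ℝ)+1) ^ 2) hsum ?_ ?_
  · exact this
  · intro k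
    have hc : ContinuousAt (fun x : ℝ => (1-x) ^ (k+1) / ((k:ℝ)+1) ^ m) 0 := by
      apply ContinuousAt.div_const
      exact ((continuous_const.sub continuous_id).pow (k+1)).continuousAt
    have := hc.tendsto.mono_left (nhdsWithin_le_nhds (s := Set.Ioi (0:ℝ)))
    simpa using this
  · filter_upwards [Ioo_mem_nhdsGT_of_mem (Set.mem_Ico.2 ⟨le_refl (0:ℝ), (one_pos : (0:ℝ) < 1)⟩)
      ] with x hx
    intro k
    have h1 : (0:ℝ) < x := hx.1
    have h2 : x < 1 := hx.2
    have hkm : ((k:ℝ)+1) ^ 2 ≤ ((k:ℝ)+1) ^ m :=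
      pow_le_pow_right₀ (by linarith [Nat.cast_nonneg (α := ℝ) k]) hm
    rw [Real.norm_eq_abs, abs_div, abs_pow, abs_pow,
      abs_of_nonneg (by linarith : (0:ℝ) ≤ 1 - x),
      abs_of_nonneg (by linarith [Nat.cast_nonneg (α := ℝ) k] : (0:ℝ) ≤ (k:ℝ)+1)]
    apply div_le_div₀ (by positivity) _ (by positivity) hkm
    calc (1-x) ^ (k+1) ≤ 1 ^ (k+1) := pow_le_pow_left₀ (by linarith) (by linarith) _
      _ = 1 := one_pow _

lemma eq_zero_of_deriv_zero {F : ℝ → ℝ}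
    (hd : ∀ y ∈ Set.Ioo (0:ℝ) 1, HasDerivAt F 0 y)
    (h0 : Tendsto F (𝓝[>] (0:ℝ)) (𝓝 0)) :
    ∀ x ∈ Set.Ioo (0:ℝ) 1, F x = 0 := by
  intro x hx
  have key : ∀ y ∈ Set.Ioo (0:ℝ) x, F y = F x := by
    intro y hy
    have hcont : ContinuousOn F (Set.Icc y x) := by
      intro z hz
      exact ((hd z ⟨lt_of_lt_of_le hy.1 hz.1, lt_of_le_of_lt hz.2 hx.2⟩).continuousAt).continuousWithinAt
    have hderiv : ∀ z ∈ Set.Ico y x, HasDerivWithinAt F 0 (Set.Ici z) z := by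
      intro z hz
      exact (hd z ⟨lt_of_lt_of_le hy.1 hz.1, lt_trans hz.2 hx.2⟩).hasDerivWithinAt
    have := constant_of_has_deriv_right_zero hcont hderiv x ⟨hy.2.le, le_refl x⟩
    exact this.symm
  have hev : F =ᶠ[𝓝[>] (0:ℝ)] fun _ => F x := by
    filter_upwards [Ioo_mem_nhdsGT_of_mem (Set.mem_Ico.2 ⟨le_refl (0:ℝ), hx.1⟩)
      ] with y hy using key y hy
  have h2 : Tendsto F (𝓝[>] (0:ℝ)) (𝓝 (F x)) := tendsto_const_nhds.congr' hev.symm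
  exact tendsto_nhds_unique h2 h0

noncomputable def T0 (x : ℝ) : ℝ := ∑' n : ℕ, H (n+1) * x ^ (n+1)
noncomputable def T1 (x : ℝ) : ℝ := ∑' n : ℕ, (H (n+1) / ((n:ℝ)+1)) * x ^ (n+1)
noncomputable def S0 (x : ℝ) : ℝ := ∑' n : ℕ, (H (n+1))^2 * x ^ (n+1)
noncomputable def S1 (x : ℝ) : ℝ := ∑' n : ℕ, ((H (n+1))^2 / ((n:ℝ)+1)) * x ^ (n+1)
noncomputable def S2 (x : ℝ) : ℝ := ∑' n : ℕ, ((H (n+1))^2 / ((n:ℝ)+1)^2) * x ^ (n+1)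

lemma cast_pos (n : ℕ) : (0:ℝ) < (n:ℝ) + 1 := by positivity

lemma one_le_cast (n : ℕ) : (1:ℝ) ≤ ((n:ℝ)+1)^2 :=
  one_le_pow₀ (by linarith [Nat.cast_nonneg (α := ℝ) n])

lemma bT0 : ∀ n : ℕ, |H (n+1)| ≤ ((n:ℝ)+1)^2 := fun n => by
  rw [abs_of_nonneg (H_nonneg _)]
  calc H (n+1) ≤ (n:ℝ)+1 := H_le n
    _ ≤ ((n:ℝ)+1)^2 := by nlinarith [Nat.cast_nonneg (α := ℝ) n]

lemma bT1 : ∀ n : ℕ, |H (n+1) / ((n:ℝ)+1)| ≤ ((n:ℝ)+1)^2 := fun n => by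
  have h0 := cast_pos n
  have hn := H_nonneg (n+1)
  rw [abs_of_nonneg (by positivity)]
  rw [div_le_iff₀ h0]
  have h := H_le n
  nlinarith

lemma bS0 : ∀ n : ℕ, |(H (n+1))^2| ≤ ((n:ℝ)+1)^2 := fun n => by
  rw [abs_of_nonneg (sq_nonneg _)]
  have h := H_le n
  have h2 := H_nonneg (n+1)
  nlinarith

lemma bS1 : ∀ n : ℕ, |(H (n+1))^2 / ((n:ℝ)+1)| ≤ ((n:ℝ)+1)^2 := fun n => by
  have h0 := cast_pos n
  rw [abs_of_nonneg (by positivity)]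
  rw [div_le_iff₀ h0]
  have h := H_le n
  have h2 := H_nonneg (n+1)
  nlinarith

lemma bS2 : ∀ n : ℕ, |(H (n+1))^2 / ((n:ℝ)+1)^2| ≤ ((n:ℝ)+1)^2 := fun n => by
  have h0 := cast_pos n
  rw [abs_of_nonneg (by positivity)]
  rw [div_le_iff₀ (by positivity)]
  have h := H_le n
  have h2 := H_nonneg (n+1)
  have h3 := one_le_cast n
  nlinarith [sq_nonneg ((n:ℝ)+1)]

lemma abs_lt_one {x : ℝ} (hx0 : 0 < x) (hx1 : x < 1) : |x| < 1 := by
  rw [abs_of_pos hx0]; exact hx1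

lemma T0_eq {x : ℝ} (hx0 : 0 < x) (hx1 : x < 1) :
    T0 x = -Real.log (1 - x) / (1 - x) := by
  have hx : |x| < 1 := abs_lt_one hx0 hx1
  have hs : Summable (fun n : ℕ => H (n+1) * x ^ (n+1)) := summable_aux bT0 hx
  have hsH : Summable (fun n : ℕ => H n * x ^ (n+1)) := by
    apply summable_aux _ hx
    intro n
    rcases n with _ | m
    · simp [H_zero, one_le_cast 0]
    · calc |H (m+1)| ≤ ((m:ℝ)+1)^2 := bT0 m
        _ ≤ ((((m+1):ℕ):ℝ)+1)^2 := by
          push_cast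
          nlinarith [Nat.cast_nonneg (α := ℝ) m]
  have hshift : ∑' n : ℕ, H n * x ^ (n+1) = x * T0 x := by
    rw [Summable.tsum_eq_zero_add hsH]
    simp only [H_zero, zero_mul, zero_add]
    rw [T0, ← tsum_mul_left]
    apply tsum_congr
    intro n
    ring
  have hsub : T0 x - x * T0 x = ∑' n : ℕ, (1 / ((n:ℝ)+1)) * x ^ (n+1) := by
    rw [← hshift, T0, ← Summable.tsum_sub hs hsH]
    apply tsum_congr
    intro n
    rw [H_succ n]
    ring
  have hlog : ∑' n : ℕ, (1 / ((n:ℝ)+1)) * x ^ (n+1) = -Real.log (1-x) := by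
    rw [← (Real.hasSum_pow_div_log_of_abs_lt_one hx).tsum_eq]
    apply tsum_congr
    intro n
    ring
  have h1x : (1:ℝ) - x ≠ 0 := by linarith
  field_simp
  rw [hlog] at hsub
  linarith [hsub]

lemma hasDerivAt_T1 {x : ℝ} (hx0 : 0 < x) (hx1 : x < 1) :
    HasDerivAt T1 (T0 x / x) x := by
  have h := hasDerivAt_tsum_pow bT1 hx0 hx1
  have heq : (fun y => ∑' n : ℕ, (H (n+1) / ((n:ℝ)+1)) * y ^ (n+1)) = T1 := rfl
  rw [heq] at h
  convert h using 1
  have hterm : ∀ n : ℕ, ((n:ℝ)+1) * (H (n+1) / ((n:ℝ)+1)) * x ^ n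
      = (H (n+1) * x ^ (n+1)) / x := by
    intro n
    have hn : ((n:ℝ)+1) ≠ 0 := by positivity
    field_simp
    ring
  rw [tsum_congr hterm, tsum_div_const, T0]

lemma hasDerivAt_S1 {x : ℝ} (hx0 : 0 < x) (hx1 : x < 1) :
    HasDerivAt S1 (S0 x / x) x := by
  have h := hasDerivAt_tsum_pow bS1 hx0 hx1
  have heq : (fun y => ∑' n : ℕ, ((H (n+1))^2 / ((n:ℝ)+1)) * y ^ (n+1)) = S1 := rfl
  rw [heq] at h
  convert h using 1
  have hterm : ∀ n : ℕ, ((n:ℝ)+1) * ((H (n+1))^2 / ((n:ℝ)+1)) * x ^ n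
      = ((H (n+1))^2 * x ^ (n+1)) / x := by
    intro n
    have hn : ((n:ℝ)+1) ≠ 0 := by positivity
    field_simp
    ring
  rw [tsum_congr hterm, tsum_div_const, S0]

lemma hasDerivAt_S2 {x : ℝ} (hx0 : 0 < x) (hx1 : x < 1) :
    HasDerivAt S2 (S1 x / x) x := by
  have h := hasDerivAt_tsum_pow bS2 hx0 hx1
  have heq : (fun y => ∑' n : ℕ, ((H (n+1))^2 / ((n:ℝ)+1)^2) * y ^ (n+1)) = S2 := rfl
  rw [heq] at h
  convert h using 1
  have hterm : ∀ n : ℕ, ((n:ℝ)+1) * ((H (n+1))^2 / ((n:ℝ)+1)^2) * x ^ n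
      = (((H (n+1))^2 / ((n:ℝ)+1)) * x ^ (n+1)) / x := by
    intro n
    have hn : ((n:ℝ)+1) ≠ 0 := by positivity
    field_simp
    ring
  rw [tsum_congr hterm, tsum_div_const, S1]

lemma hasDerivAt_log1m {y : ℝ} (hy : y < 1) :
    HasDerivAt (fun z => Real.log (1 - z)) (-(1-y)⁻¹) y := by
  have hne : (1:ℝ) - y ≠ 0 := by linarith
  have h := (Real.hasDerivAt_log hne).comp y ((hasDerivAt_id y).const_sub 1)
  refine h.congr_deriv ?_
  simp [Function.comp]

lemma hasDerivAt_Li_comp (m : ℕ) {y : ℝ} (hy0 : 0 < y) (hy1 : y < 1) :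
    HasDerivAt (fun z => Li (m+1) (1 - z)) (-(Li m (1-y) / (1-y))) y := by
  have h := (hasDerivAt_Li m (by linarith : (0:ℝ) < 1 - y) (by linarith)).comp y
    ((hasDerivAt_id y).const_sub 1)
  refine h.congr_deriv ?_
  simp [Function.comp]

lemma tendsto_log1m_zero : Tendsto (fun x : ℝ => Real.log (1 - x)) (𝓝[>] (0:ℝ)) (𝓝 0) := by
  have hc : ContinuousAt (fun x : ℝ => Real.log (1 - x)) 0 := by
    have h1 : ContinuousAt Real.log ((1:ℝ) - 0) := Real.continuousAt_log (by norm_num)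
    exact h1.comp ((continuous_const.sub continuous_id).continuousAt)
  have := hc.tendsto.mono_left (nhdsWithin_le_nhds (s := Set.Ioi (0:ℝ)))
  simpa using this

lemma tendsto_T1_zero : Tendsto T1 (𝓝[>] (0:ℝ)) (𝓝 0) := tendsto_tsum_zero bT1

lemma tendsto_S2_zero : Tendsto S2 (𝓝[>] (0:ℝ)) (𝓝 0) := tendsto_tsum_zero bS2

lemma tendsto_S1_zero : Tendsto S1 (𝓝[>] (0:ℝ)) (𝓝 0) := tendsto_tsum_zero bS1

lemma T1_eq {x : ℝ} (hx0 : 0 < x) (hx1 : x < 1) :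
    T1 x = Li 2 x + Real.log (1 - x) ^ 2 / 2 := by
  set F : ℝ → ℝ := fun y => T1 y - Li 2 y - Real.log (1 - y) ^ 2 / 2 with hF
  have key : ∀ y ∈ Set.Ioo (0:ℝ) 1, F y = 0 := by
    apply eq_zero_of_deriv_zero
    · intro y hy
      have hy0 : (0:ℝ) < y := hy.1
      have hy1 : y < 1 := hy.2
      have h1 := hasDerivAt_T1 hy0 hy1
      have h2 := hasDerivAt_Li 1 hy0 hy1
      have h3 := hasDerivAt_log1m hy1
      have hlog2 : HasDerivAt (fun z => Real.log (1 - z) ^ 2 / 2)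
          (Real.log (1-y) * (-(1-y)⁻¹)) y := by
        have := (h3.pow 2).div_const 2
        refine this.congr_deriv ?_
        ring
      have hd := (h1.sub h2).sub hlog2
      refine hd.congr_deriv ?_
      rw [T0_eq hy0 hy1, Li_one_eq (abs_lt_one hy0 hy1)]
      have hne1 : (1:ℝ) - y ≠ 0 := by linarith
      field_simp
      ring
    · have h1 := tendsto_T1_zero
      have h2 := tendsto_Li_zero 2
      have h3 : Tendsto (fun x : ℝ => Real.log (1-x) ^ 2 / 2) (𝓝[>] (0:ℝ)) (𝓝 0) := by
        have := (tendsto_log1m_zero.pow 2).div_const 2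
        simpa using this
      have := (h1.sub h2).sub h3
      simpa using this
  have := key x ⟨hx0, hx1⟩
  rw [hF] at this
  linarith [this]

lemma S0_eq {x : ℝ} (hx0 : 0 < x) (hx1 : x < 1) :
    S0 x = (Real.log (1 - x) ^ 2 + Li 2 x) / (1 - x) := by
  have hx : |x| < 1 := abs_lt_one hx0 hx1
  have hs : Summable (fun n : ℕ => (H (n+1))^2 * x ^ (n+1)) := summable_aux bS0 hx
  have hsH : Summable (fun n : ℕ => (H n)^2 * x ^ (n+1)) := by
    apply summable_aux _ hx
    intro n
    rcases n with _ | m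
    · simp [H_zero, one_le_cast 0]
    · rw [abs_of_nonneg (sq_nonneg _)]
      have h := H_le m
      have h2 := H_nonneg (m+1)
      push_cast
      nlinarith [Nat.cast_nonneg (α := ℝ) m]
  have hshift : ∑' n : ℕ, (H n)^2 * x ^ (n+1) = x * S0 x := by
    rw [Summable.tsum_eq_zero_add hsH]
    simp only [H_zero, zero_mul, zero_add, ne_eq, OfNat.ofNat_ne_zero,
      not_false_eq_true, zero_pow]
    rw [S0, ← tsum_mul_left]
    apply tsum_congr
    intro n
    ring
  have hsT1 : Summable (fun n : ℕ => 2 * ((H (n+1) / ((n:ℝ)+1)) * x ^ (n+1))) :=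
    (summable_aux bT1 hx).mul_left 2
  have hsLi : Summable (fun n : ℕ => (1 / ((n:ℝ)+1)^2) * x ^ (n+1)) := summable_Li 2 hx
  have hsub : S0 x - x * S0 x = 2 * T1 x - Li 2 x := by
    rw [← hshift, S0, ← Summable.tsum_sub hs hsH]
    have hterm : ∀ n : ℕ, (H (n+1))^2 * x ^ (n+1) - (H n)^2 * x ^ (n+1)
        = 2 * ((H (n+1) / ((n:ℝ)+1)) * x ^ (n+1)) - (1 / ((n:ℝ)+1)^2) * x ^ (n+1) := by
      intro n
      have hHn : H n = H (n+1) - 1/((n:ℝ)+1) := by rw [H_succ]; ring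
      have hne : ((n:ℝ)+1) ≠ 0 := by positivity
      rw [hHn]
      field_simp
      ring
    rw [tsum_congr hterm, Summable.tsum_sub hsT1 hsLi, tsum_mul_left, ← Li_eq, T1]
  rw [T1_eq hx0 hx1] at hsub
  have hne1 : (1:ℝ) - x ≠ 0 := by linarith
  field_simp
  linarith [hsub]

lemma S1_eq {x : ℝ} (hx0 : 0 < x) (hx1 : x < 1) :
    S1 x = Li 3 x - Li 2 x * Real.log (1 - x) - Real.log (1 - x) ^ 3 / 3 := by
  set F : ℝ → ℝ := fun y =>
    S1 y - Li 3 y + Li 2 y * Real.log (1 - y) + Real.log (1 - y) ^ 3 / 3 with hF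
  have key : ∀ y ∈ Set.Ioo (0:ℝ) 1, F y = 0 := by
    apply eq_zero_of_deriv_zero
    · intro y hy
      have hy0 : (0:ℝ) < y := hy.1
      have hy1 : y < 1 := hy.2
      have h1 := hasDerivAt_S1 hy0 hy1
      have h2 := hasDerivAt_Li 2 hy0 hy1
      have h3 := hasDerivAt_log1m hy1
      have h4 := (hasDerivAt_Li 1 hy0 hy1).mul h3
      have h5 := (h3.pow 3).div_const 3
      have hd := ((h1.sub h2).add h4).add h5
      refine hd.congr_deriv ?_
      rw [S0_eq hy0 hy1, Li_one_eq (abs_lt_one hy0 hy1)]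
      have hne1 : (1:ℝ) - y ≠ 0 := by linarith
      field_simp
      ring
    · have h1 := tendsto_S1_zero
      have h2 := tendsto_Li_zero 3
      have h3 := (tendsto_Li_zero 2).mul tendsto_log1m_zero
      have h4 := (tendsto_log1m_zero.pow 3).div_const 3
      have := ((h1.sub h2).add h3).add h4
      simpa using this
  have := key x ⟨hx0, hx1⟩
  rw [hF] at this
  linarith [this]

lemma Li4_one : Li 4 1 = Real.pi ^ 4 / 90 := by
  have h := hasSum_zeta_four
  have h2 := h.tsum_eq
  rw [Summable.tsum_eq_zero_add h.summable] at h2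
  simp only [Nat.cast_zero] at h2
  norm_num at h2
  rw [Li, ← h2]
  apply tsum_congr
  intro n
  push_cast
  rw [one_pow, one_div]

lemma tendsto_logx_L3 :
    Tendsto (fun x : ℝ => Real.log x * Real.log (1-x) ^ 3) (𝓝[>] (0:ℝ)) (𝓝 0) := by
  apply squeeze_zero_norm' (a := fun x : ℝ => 8 * |Real.log x * x ^ 3|)
  · filter_upwards [Ioo_mem_nhdsGT_of_mem (Set.mem_Ico.2 ⟨le_refl (0:ℝ), (by norm_num : (0:ℝ) < 1/2)⟩)
      ] with x hx
    have h1 : (0:ℝ) < x := hx.1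
    have h2 : x < 1/2 := hx.2
    have h1x : (0:ℝ) < 1 - x := by linarith
    have hL : |Real.log (1-x)| ≤ 2 * x := by
      have hnp : Real.log (1-x) ≤ 0 := Real.log_nonpos (by linarith) (by linarith)
      rw [abs_of_nonpos hnp]
      have : -Real.log (1-x) = Real.log (1-x)⁻¹ := (Real.log_inv _).symm
      rw [this]
      have hub := Real.log_le_sub_one_of_pos (inv_pos.2 h1x)
      have hinv : (1-x)⁻¹ - 1 ≤ 2 * x := by
        rw [inv_eq_one_div, div_sub' h1x.ne']
        rw [div_le_iff₀ h1x]
        nlinarith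
      linarith
    rw [Real.norm_eq_abs, abs_mul, abs_pow]
    calc |Real.log x| * |Real.log (1-x)| ^ 3 ≤ |Real.log x| * (2*x) ^ 3 := by
          apply mul_le_mul_of_nonneg_left _ (abs_nonneg _)
          exact pow_le_pow_left₀ (abs_nonneg _) hL 3
      _ = 8 * (|Real.log x| * x ^ 3) := by ring
      _ = 8 * |Real.log x * x ^ 3| := by
          rw [abs_mul, abs_pow, abs_of_pos h1]
  · have h := tendsto_log_mul_rpow_nhdsGT_zero (by norm_num : (0:ℝ) < 3)
    have heq : (fun x : ℝ => Real.log x * x ^ (3:ℝ)) =ᶠ[𝓝[>] (0:ℝ)]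
        (fun x : ℝ => Real.log x * x ^ (3:ℕ)) := by
      filter_upwards [self_mem_nhdsWithin] with x _
      rw [show (3:ℝ) = ((3:ℕ):ℝ) by norm_num, Real.rpow_natCast]
    have h2 := h.congr' heq
    have h3 := h2.abs
    rw [abs_zero] at h3
    have := h3.const_mul (8:ℝ)
    simpa using this


/-- Proposition 4 (1): for `0 < x < 1`,
`∑_{n=1}^∞ H_n² xⁿ/n² = Li₂(x)²/2 − 2Li₄(1−x) + Li₄(x) − Li₂(1−x) log²(1−x)
  + 2Li₃(1−x) log(1−x) − (1/3) log x log³(1−x) + π⁴/45`. -/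
theorem gen_fun_Hsq (x : ℝ) (hx0 : 0 < x) (hx1 : x < 1) :
    (∑' n : ℕ, (H (n + 1)) ^ 2 * x ^ (n + 1) / ((n : ℝ) + 1) ^ 2)
      = Li 2 x ^ 2 / 2 - 2 * Li 4 (1 - x) + Li 4 x
        - Li 2 (1 - x) * Real.log (1 - x) ^ 2 + 2 * Li 3 (1 - x) * Real.log (1 - x)
        - (1 / 3) * Real.log x * Real.log (1 - x) ^ 3 + Real.pi ^ 4 / 45 := by
  have hLHS : (∑' n : ℕ, (H (n + 1)) ^ 2 * x ^ (n + 1) / ((n : ℝ) + 1) ^ 2) = S2 x := by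
    rw [S2]
    exact tsum_congr fun n => by ring
  rw [hLHS]
  set F : ℝ → ℝ := fun y =>
    S2 y - (Li 2 y ^ 2 / 2 - 2 * Li 4 (1 - y) + Li 4 y
      - Li 2 (1 - y) * Real.log (1 - y) ^ 2 + 2 * Li 3 (1 - y) * Real.log (1 - y)
      - (1 / 3) * Real.log y * Real.log (1 - y) ^ 3 + Real.pi ^ 4 / 45) with hF
  have key : ∀ y ∈ Set.Ioo (0:ℝ) 1, F y = 0 := by
    apply eq_zero_of_deriv_zero
    · intro y hy
      have hy0 : (0:ℝ) < y := hy.1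
      have hy1 : y < 1 := hy.2
      have hne1 : (1:ℝ) - y ≠ 0 := by linarith
      have hS2 := hasDerivAt_S2 hy0 hy1
      have hlog := hasDerivAt_log1m hy1
      have hLi2sq := ((hasDerivAt_Li 1 hy0 hy1).pow 2).div_const 2
      have hLi4c := (hasDerivAt_Li_comp 3 hy0 hy1).const_mul (2:ℝ)
      have hLi4 := hasDerivAt_Li 3 hy0 hy1
      have hLi2c := (hasDerivAt_Li_comp 1 hy0 hy1).mul (hlog.pow 2)
      have hLi3c := ((hasDerivAt_Li_comp 2 hy0 hy1).const_mul (2:ℝ)).mul hlog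
      have hlogx := ((Real.hasDerivAt_log hy0.ne').const_mul (1/3 : ℝ)).mul (hlog.pow 3)
      have hd := hS2.sub ((((((hLi2sq.sub hLi4c).add hLi4).sub hLi2c).add hLi3c).sub
        hlogx).add_const (Real.pi ^ 4 / 45))
      refine hd.congr_deriv ?_
      have e1 : Li 1 y = -Real.log (1 - y) := Li_one_eq (abs_lt_one hy0 hy1)
      have e2 : Li 1 (1 - y) = -Real.log y := by
        have := Li_one_eq (x := 1 - y) (by rw [abs_of_pos (by linarith)]; linarith)
        simpa using this
      rw [S1_eq hy0 hy1, e1, e2]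
      simp only [Pi.pow_apply]
      field_simp
      ring
    · have h1 := tendsto_S2_zero
      have h2 := ((tendsto_Li_zero 2).pow 2).div_const 2
      have h3 := (tendsto_Li_one (by norm_num : 2 ≤ 4)).const_mul (2:ℝ)
      have h4 := tendsto_Li_zero 4
      have h5 := (tendsto_Li_one (le_refl 2)).mul (tendsto_log1m_zero.pow 2)
      have h6 := ((tendsto_Li_one (by norm_num : 2 ≤ 3)).const_mul (2:ℝ)).mul
        tendsto_log1m_zero
      have h7 := tendsto_logx_L3.const_mul (1/3 : ℝ)
      have hsum := h1.sub ((((((h2.sub h3).add h4).sub h5).add h6).sub h7).add_const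
        (Real.pi ^ 4 / 45))
      have hval : (0:ℝ) - (0 ^ 2 / 2 - 2 * Li 4 1 + 0 - Li 2 1 * 0 ^ 2 + 2 * Li 3 1 * 0
          - 1/3 * 0 + Real.pi ^ 4 / 45) = 0 := by
        rw [Li4_one]
        ring
      have hfun : ∀ z : ℝ, S2 z - (Li 2 z ^ 2 / 2 - 2 * Li 4 (1 - z) + Li 4 z
          - Li 2 (1 - z) * Real.log (1 - z) ^ 2 + 2 * Li 3 (1 - z) * Real.log (1 - z)
          - 1 / 3 * (Real.log z * Real.log (1 - z) ^ 3) + Real.pi ^ 4 / 45) = F z := by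
        intro z
        rw [hF]
        ring
      have hfinal := hsum.congr hfun
      rwa [hval] at hfinal
  have := key x ⟨hx0, hx1⟩
  rw [hF] at this
  linarith [this]
end
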